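/- Let h, h̃ > 0 and let x, y be two points of S = {(u,v,w,ũ,ṽ,w̃) ∈ ℝ⁶ : u² + v² + w² = h², ũ² + ṽ² + w̃² = h̃²}. Then x and y have the same invariants (π, ρ, σ, τ) = (u, ũ, vṽ − ww̃, vw̃ + ṽw) if and only if there exists t ∈ ℝ with R_t x = y, where R_t(u,v,w,ũ,ṽ,w̃) = (u, v cos 2t + w sin 2t, w cos 2t − v sin 2t, ũ, ṽ cos 2t − w̃ sin 2t, w̃ cos 2t + ṽ sin 2t). That is, the fibers of the invariant map are exactly the orbits of the circle action generated by I = u − ũ. -/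

import Mathlib

/-!
STATEMENT 8: On the product of spheres `S = S²_h × S²_h̃`, two points have the same
invariants `(π, ρ, σ, τ) = (u, ũ, vṽ − ww̃, vw̃ + ṽw)` if and only if they lie on the
same orbit of the circle action `R_t` generated by the momentum `I = u − ũ`:
the fibers of the invariant map are exactly the orbits.
-/


open Complex in
lemma rot_key (z z' p p' : ℂ) (hz : ‖z‖ = ‖z'‖)
    (hp : ‖p‖ = ‖p'‖) (hm : z * p = z' * p') :
    ∃ θ : ℝ, z' = z * Complex.exp (-(θ:ℂ) * Complex.I) ∧
      p' = p * Complex.exp ((θ:ℂ) * Complex.I) := by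
  by_cases hz0 : z = 0
  · have hz'0 : z' = 0 := by
      have := hz; rw [hz0] at this; simpa using this.symm
    by_cases hp0 : p = 0
    · have hp'0 : p' = 0 := by
        have := hp; rw [hp0] at this; simpa using this.symm
      exact ⟨0, by simp [hz0, hz'0, hp0, hp'0]⟩
    · refine ⟨(p'/p).arg, by simp [hz0, hz'0], ?_⟩
      have habs : ‖p'/p‖ = 1 := by
        rw [norm_div, ← hp, div_self (norm_ne_zero_iff.mpr hp0)]
      have harg := Complex.norm_mul_exp_arg_mul_I (p'/p)
      rw [habs] at harg
      simp only [ofReal_one, one_mul] at harg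
      rw [harg, mul_div_assoc']
      rw [eq_div_iff hp0]; ring
  · have hz'0 : z' ≠ 0 := by
      intro hc; rw [hc] at hz; simp at hz; exact hz0 (by simpa using hz)
    have habs : ‖z/z'‖ = 1 := by
      rw [norm_div, hz, div_self (norm_ne_zero_iff.mpr hz'0)]
    have harg := Complex.norm_mul_exp_arg_mul_I (z/z')
    rw [habs] at harg
    simp only [ofReal_one, one_mul] at harg
    refine ⟨(z/z').arg, ?_, ?_⟩
    · have hinv : Complex.exp (-((z/z').arg:ℂ) * Complex.I) = z'/z := by
        rw [neg_mul, Complex.exp_neg, harg, inv_div]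
      rw [hinv, mul_div_assoc', eq_div_iff hz0]; ring
    · rw [harg, mul_div_assoc', eq_div_iff hz'0]
      linear_combination -hm

theorem invariant_fibers_are_orbits
    (h ht : ℝ) (hh : 0 < h) (hht : 0 < ht)
    (u v w ut vt wt u' v' w' ut' vt' wt' : ℝ)
    (hx1 : u^2 + v^2 + w^2 = h^2) (hx2 : ut^2 + vt^2 + wt^2 = ht^2)
    (hy1 : u'^2 + v'^2 + w'^2 = h^2) (hy2 : ut'^2 + vt'^2 + wt'^2 = ht^2) :
    (u = u' ∧ ut = ut' ∧
     v*vt - w*wt = v'*vt' - w'*wt' ∧ v*wt + vt*w = v'*wt' + vt'*w')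
    ↔ ∃ t : ℝ,
      ((u, v * Real.cos (2*t) + w * Real.sin (2*t),
            w * Real.cos (2*t) - v * Real.sin (2*t),
        ut, vt * Real.cos (2*t) - wt * Real.sin (2*t),
            wt * Real.cos (2*t) + vt * Real.sin (2*t))
        : ℝ × ℝ × ℝ × ℝ × ℝ × ℝ) = (u', v', w', ut', vt', wt') := by
  constructor
  · rintro ⟨h1, h2, h3, h4⟩
    subst h1 h2
    set z : ℂ := ⟨v, w⟩ with hzdef
    set z' : ℂ := ⟨v', w'⟩
    set p : ℂ := ⟨vt, wt⟩
    set p' : ℂ := ⟨vt', wt'⟩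
    have hn1 : Complex.normSq z = Complex.normSq z' := by
      simp only [z, z', Complex.normSq_mk]; nlinarith
    have hn2 : Complex.normSq p = Complex.normSq p' := by
      simp only [p, p', Complex.normSq_mk]; nlinarith
    have hz : ‖z‖ = ‖z'‖ := by
      rw [Complex.norm_def, Complex.norm_def, hn1]
    have hp : ‖p‖ = ‖p'‖ := by
      rw [Complex.norm_def, Complex.norm_def, hn2]
    have hm : z * p = z' * p' := by
      apply Complex.ext <;>
        simp only [Complex.mul_re, Complex.mul_im, z, z', p, p'] <;> linarith
    obtain ⟨θ, e1, e2⟩ := rot_key z z' p p' hz hp hm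
    refine ⟨θ/2, ?_⟩
    rw [show (2:ℝ)*(θ/2) = θ by ring]
    have c1 := congrArg Complex.re e1
    have c2 := congrArg Complex.im e1
    have c3 := congrArg Complex.re e2
    have c4 := congrArg Complex.im e2
    simp only [Complex.exp_mul_I, Complex.mul_re, Complex.mul_im,
      Complex.add_re, Complex.add_im, Complex.neg_re, Complex.neg_im,
      Complex.cos_ofReal_re, Complex.cos_ofReal_im, Complex.sin_ofReal_re,
      Complex.sin_ofReal_im, Complex.I_re, Complex.I_im, Complex.ofReal_re,
      Complex.ofReal_im, Complex.cos_neg, Complex.sin_neg,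
      z, z', p, p'] at c1 c2 c3 c4
    have g1 : v * Real.cos θ + w * Real.sin θ = v' := by rw [c1]; ring
    have g2 : w * Real.cos θ - v * Real.sin θ = w' := by rw [c2]; ring
    have g3 : vt * Real.cos θ - wt * Real.sin θ = vt' := by rw [c3]; ring
    have g4 : wt * Real.cos θ + vt * Real.sin θ = wt' := by rw [c4]; ring
    simp only [Prod.mk.injEq]
    exact ⟨trivial, g1, g2, trivial, g3, g4⟩
  · rintro ⟨t, he⟩
    simp only [Prod.mk.injEq] at he
    obtain ⟨e1, e2, e3, e4, e5, e6⟩ := he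
    refine ⟨e1, e4, ?_, ?_⟩ <;> rw [← e2, ← e3, ← e5, ← e6]
    · linear_combination -(v*vt - w*wt) * (Real.sin_sq_add_cos_sq (2*t))
    · linear_combination -(v*wt + vt*w) * (Real.sin_sq_add_cos_sq (2*t))
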